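/- The chain distance d on the cusps is a Γ-invariant metric: (i) d(a,b) is well defined, i.e. for any two cusps a, b there exists a chain of finite length from a to b; (ii) d(a,b) = d(b,a) for all cusps a, b; (iii) d(a,b) = 0 if and only if a = b; (iv) d(a,c) ≤ d(a,b) + d(b,c) for all cusps a, b, c; (v) d(γ·a, γ·b) = d(a,b) for all γ ∈ Γ and all cusps a, b. -/

import Mathlib

open MvPolynomial

/-- `SL(2, ℤ)`. -/
abbrev SL2Z := Matrix.SpecialLinearGroup (Fin 2) ℤ

instance : Fact (Even (Fintype.card (Fin 2))) := ⟨by decide⟩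

/-- The subgroup `{±1}` of `SL(2,ℤ)`. -/
def pmOne : Subgroup SL2Z := Subgroup.zpowers (-1 : SL2Z)

instance pmOne_normal : pmOne.Normal := by
  constructor
  intro x hx g
  obtain ⟨k, rfl⟩ := Subgroup.mem_zpowers_iff.mp hx
  have hc : Commute g ((-1 : SL2Z) ^ k) := by
    refine Commute.zpow_right ?_ k
    unfold Commute SemiconjBy
    rw [mul_neg_one, neg_one_mul]
  rw [hc.eq, mul_assoc, mul_inv_cancel, mul_one]
  exact Subgroup.mem_zpowers_iff.mpr ⟨k, rfl⟩

/-- `Γ = PSL(2, ℤ) = SL(2,ℤ)/{±1}`. -/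
abbrev PSL2Z := SL2Z ⧸ pmOne

/-- `S = [[0,-1],[1,0]]` in `Γ`. -/
def pS : PSL2Z := QuotientGroup.mk ⟨!![0, -1; 1, 0], by norm_num [Matrix.det_fin_two_of]⟩

/-- `U = [[0,1],[-1,1]]` in `Γ`. -/
def pU : PSL2Z := QuotientGroup.mk ⟨!![0, 1; -1, 1], by norm_num [Matrix.det_fin_two_of]⟩

/-- `T = [[1,1],[0,1]]` in `Γ`. -/
def pT : PSL2Z := QuotientGroup.mk ⟨!![1, 1; 0, 1], by norm_num [Matrix.det_fin_two_of]⟩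

/-- The cusps `ℙ¹(ℚ) = ℚ ∪ {∞}`. -/
abbrev Cusp := OnePoint ℚ

/-- The Möbius action of `SL(2, ℤ)` on the cusps. -/
def mobiusSL (γ : SL2Z) : Cusp → Cusp := fun x =>
  match x with
  | OnePoint.infty =>
      if ((γ.1 1 0 : ℤ) : ℚ) = 0 then OnePoint.infty
      else OnePoint.some (((γ.1 0 0 : ℤ) : ℚ) / ((γ.1 1 0 : ℤ) : ℚ))
  | OnePoint.some r =>
      if ((γ.1 1 0 : ℤ) : ℚ) * r + ((γ.1 1 1 : ℤ) : ℚ) = 0 then OnePoint.infty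
      else OnePoint.some
        ((((γ.1 0 0 : ℤ) : ℚ) * r + ((γ.1 0 1 : ℤ) : ℚ)) /
          (((γ.1 1 0 : ℤ) : ℚ) * r + ((γ.1 1 1 : ℤ) : ℚ)))

lemma mobiusSL_neg (γ : SL2Z) : mobiusSL (-γ) = mobiusSL γ := by
  funext x
  cases x with
  | none =>
      simp only [mobiusSL, Matrix.SpecialLinearGroup.coe_neg, Matrix.neg_apply, Int.cast_neg,
        neg_eq_zero, neg_div_neg_eq]
  | some r =>
      simp only [mobiusSL, Matrix.SpecialLinearGroup.coe_neg, Matrix.neg_apply, Int.cast_neg,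
        neg_mul, ← neg_add, neg_eq_zero, neg_div_neg_eq]

/-- The Möbius action of `Γ = PSL(2, ℤ)` on the cusps. -/
def mobius (q : PSL2Z) : Cusp → Cusp :=
  Quotient.liftOn q mobiusSL (by
    intro a b h
    replace h : a⁻¹ * b ∈ pmOne := QuotientGroup.leftRel_apply.mp h
    obtain ⟨k, hk⟩ := Subgroup.mem_zpowers_iff.mp h
    have hb : b = a * (-1 : SL2Z) ^ k := by rw [hk, mul_inv_cancel_left]
    rcases Int.even_or_odd k with he | ho
    · rw [hb, he.neg_one_zpow, mul_one]
    · obtain ⟨m, rfl⟩ := ho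
      have h2 : ((-1 : SL2Z)) ^ (2 * m) = 1 := Even.neg_one_zpow ⟨m, by ring⟩
      rw [hb, zpow_add_one, h2, one_mul, mul_neg_one, mobiusSL_neg])

/-- The cusp `∞`. -/
def cInf : Cusp := OnePoint.infty

/-- The cusp `0`. -/
def cZero : Cusp := OnePoint.some 0


def mob (a b c d : ℚ) : Cusp → Cusp := fun x =>
  match x with
  | OnePoint.infty => if c = 0 then OnePoint.infty else OnePoint.some (a / c)
  | OnePoint.some r => if c * r + d = 0 then OnePoint.infty
      else OnePoint.some ((a * r + b) / (c * r + d))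

lemma mob_key (a b c d e f p q : ℚ) (_hg : a * d - b * c = 1) (hh : e * q - f * p = 1)
    (x : Cusp) :
    mob (a*e+b*p) (a*f+b*q) (c*e+d*p) (c*f+d*q) x = mob a b c d (mob e f p q x) := by
  cases x with
  | none =>
    show mob _ _ _ _ OnePoint.infty = mob a b c d (mob e f p q OnePoint.infty)
    by_cases hp : p = 0
    · have he : e ≠ 0 := by
        intro h; rw [h, hp] at hh; simp at hh
      subst hp
      simp only [mob, mul_zero, add_zero, if_neg he]
      by_cases hc : c = 0
      · simp [hc, mul_eq_zero, he]
      · have : c * e ≠ 0 := mul_ne_zero hc he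
        simp only [if_neg hc, if_neg this]
        congr 1
        rw [mul_div_mul_right _ _ he]
    · simp only [mob, if_neg hp]
      have hden : c * (e / p) + d = (c * e + d * p) / p := by field_simp
      by_cases h0 : c * e + d * p = 0
      · simp [h0, hden, hp]
      · have h1 : c * (e / p) + d ≠ 0 := by rw [hden]; exact div_ne_zero h0 hp
        simp only [if_neg h0, if_neg h1]
        congr 1
        rw [hden]
        field_simp
  | some r =>
    show mob _ _ _ _ (OnePoint.some r) = mob a b c d (mob e f p q (OnePoint.some r))
    have hnum : (c*e+d*p) * r + (c*f+d*q) = c * (e*r+f) + d * (p*r+q) := by ring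
    have hnum2 : (a*e+b*p) * r + (a*f+b*q) = a * (e*r+f) + b * (p*r+q) := by ring
    by_cases hD : p * r + q = 0
    · have hp : p ≠ 0 := by
        intro h; rw [h] at hD hh; simp at hD; rw [hD] at hh; simp at hh
      have hE : p * (e * r + f) = -1 := by
        have hq : q = -(p*r) := by linarith [hD]
        calc p * (e*r+f) = -(e * q - f * p) + e*(p*r+q) := by rw [hq]; ring
        _ = -1 := by rw [hh, hD]; ring
      have hEne : e * r + f ≠ 0 := by
        intro h; rw [h, mul_zero] at hE; norm_num at hE
      simp only [mob, if_pos hD, hnum, hnum2, hD, mul_zero, add_zero]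
      by_cases hc : c = 0
      · simp [hc, mul_eq_zero, hEne]
      · have : c * (e*r+f) ≠ 0 := mul_ne_zero hc hEne
        simp only [if_neg hc, if_neg this]
        congr 1
        rw [mul_div_mul_right _ _ hEne]
    · simp only [mob, if_neg hD]
      have hden : c * ((e*r+f) / (p*r+q)) + d = (c * (e*r+f) + d * (p*r+q)) / (p*r+q) := by
        rw [eq_div_iff hD, add_mul, mul_assoc, div_mul_cancel₀ _ hD]
      by_cases h0 : c * (e*r+f) + d * (p*r+q) = 0
      · simp [hnum, h0, hden, hD]
      · have h1 : c * ((e*r+f)/(p*r+q)) + d ≠ 0 := by rw [hden]; exact div_ne_zero h0 hD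
        simp only [hnum, hnum2, if_neg h0, if_neg h1]
        congr 1
        rw [hden]
        field_simp
        have hD' : r * p + q ≠ 0 := by rwa [mul_comm] at hD
        field_simp [hD']

/-- A chain of length `N ≥ 1` from `a` to `b` : matrices `γ_0, ..., γ_{N-1} ∈ Γ` with
`a = γ_0·∞`, `γ_i·0 = γ_{i+1}·∞` and `γ_{N-1}·0 = b`. -/
def IsChainOf (a b : Cusp) (N : ℕ) : Prop :=
  0 < N ∧ ∃ γ : ℕ → PSL2Z,
    mobius (γ 0) cInf = a ∧
    (∀ i : ℕ, i + 1 < N → mobius (γ i) cZero = mobius (γ (i + 1)) cInf) ∧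
    mobius (γ (N - 1)) cZero = b

open Classical in
/-- The chain distance on cusps : `d(a,a) = 0` and `d(a,b)` is the minimal length of a chain
from `a` to `b` for `a ≠ b`. -/
noncomputable def cuspDist (a b : Cusp) : ℕ :=
  if a = b then 0 else sInf {N | IsChainOf a b N}

/-- The height of a cusp : `h(a) = max (d(a,∞), d(a,0))`. -/
noncomputable def cuspHeight (a : Cusp) : ℕ :=
  max (cuspDist a cInf) (cuspDist a cZero)


section ChainDev

lemma mobiusSL_eq_mob (g : SL2Z) :
    mobiusSL g = mob ((g.1 0 0 : ℤ) : ℚ) ((g.1 0 1 : ℤ) : ℚ) ((g.1 1 0 : ℤ) : ℚ)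
      ((g.1 1 1 : ℤ) : ℚ) := by
  funext x
  cases x <;> rfl

lemma det_q (g : SL2Z) :
    ((g.1 0 0 : ℤ) : ℚ) * ((g.1 1 1 : ℤ) : ℚ) - ((g.1 0 1 : ℤ) : ℚ) * ((g.1 1 0 : ℤ) : ℚ) = 1 := by
  have h := g.2
  rw [Matrix.det_fin_two] at h
  have : ((g.1 0 0 * g.1 1 1 - g.1 0 1 * g.1 1 0 : ℤ) : ℚ) = ((1 : ℤ) : ℚ) := by rw [h]
  push_cast at this
  linarith

lemma mobiusSL_mul (g h : SL2Z) (x : Cusp) :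
    mobiusSL (g * h) x = mobiusSL g (mobiusSL h x) := by
  have hent : ∀ i j, (((g * h).1 i j : ℤ) : ℚ)
      = ((g.1 i 0 : ℤ) : ℚ) * ((h.1 0 j : ℤ) : ℚ) + ((g.1 i 1 : ℤ) : ℚ) * ((h.1 1 j : ℤ) : ℚ) := by
    intro i j
    have : (g * h).1 i j = g.1 i 0 * h.1 0 j + g.1 i 1 * h.1 1 j := by
      rw [Matrix.SpecialLinearGroup.coe_mul, Matrix.mul_apply, Fin.sum_univ_two]
    rw [this]; push_cast; ring
  rw [mobiusSL_eq_mob, mobiusSL_eq_mob, mobiusSL_eq_mob,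
    hent 0 0, hent 0 1, hent 1 0, hent 1 1]
  exact mob_key _ _ _ _ _ _ _ _ (det_q g) (det_q h) x

lemma mobius_mk (g : SL2Z) : mobius (QuotientGroup.mk g) = mobiusSL g := rfl

lemma mobius_mul (g h : PSL2Z) (x : Cusp) :
    mobius (g * h) x = mobius g (mobius h x) := by
  induction g using QuotientGroup.induction_on with
  | H g =>
  induction h using QuotientGroup.induction_on with
  | H h =>
  rw [show (QuotientGroup.mk g * QuotientGroup.mk h : PSL2Z) = QuotientGroup.mk (g * h) from rfl,
    mobius_mk, mobius_mk, mobius_mk]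
  exact mobiusSL_mul g h x

lemma mobius_one (x : Cusp) : mobius (1 : PSL2Z) x = x := by
  rw [show (1 : PSL2Z) = QuotientGroup.mk 1 from rfl, mobius_mk]
  cases x with
  | none =>
      simp only [mobiusSL, Matrix.SpecialLinearGroup.coe_one, Matrix.one_apply]
      norm_num
      rfl
  | some r =>
      simp only [mobiusSL, Matrix.SpecialLinearGroup.coe_one, Matrix.one_apply]
      norm_num
      rfl

lemma mobius_inv_cancel (g : PSL2Z) (x : Cusp) : mobius g⁻¹ (mobius g x) = x := by
  rw [← mobius_mul, inv_mul_cancel, mobius_one]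

lemma mobius_injective (g : PSL2Z) {a b : Cusp} (h : mobius g a = mobius g b) : a = b := by
  have := congrArg (mobius g⁻¹) h
  rwa [mobius_inv_cancel, mobius_inv_cancel] at this

/-- `T^m = [[1,m],[0,1]]`. -/
def sTm (m : ℤ) : SL2Z := ⟨!![1, m; 0, 1], by norm_num [Matrix.det_fin_two_of]⟩

def pTm (m : ℤ) : PSL2Z := QuotientGroup.mk (sTm m)

lemma mobius_pTm_inf (m : ℤ) : mobius (pTm m) cInf = cInf := by
  rw [pTm, mobius_mk]
  simp [mobiusSL, sTm, cInf, OnePoint.infty]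
  rfl

lemma mobius_pTm_some (m : ℤ) (r : ℚ) :
    mobius (pTm m) (OnePoint.some r) = OnePoint.some (r + m) := by
  rw [pTm, mobius_mk]
  simp [mobiusSL, sTm]

lemma mobius_pS_inf : mobius pS cInf = cZero := by
  rw [pS]; erw [mobius_mk]
  simp [mobiusSL, cInf, cZero, OnePoint.infty]

lemma mobius_pS_zero : mobius pS cZero = cInf := by
  rw [pS]; erw [mobius_mk]
  simp [mobiusSL, cInf, cZero, OnePoint.infty]
  rfl

lemma mobius_pS_some (r : ℚ) (hr : r ≠ 0) :
    mobius pS (OnePoint.some r) = OnePoint.some (-1 / r) := by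
  rw [pS]; erw [mobius_mk]
  simp [mobiusSL, hr]

lemma chain_map (g : PSL2Z) {a b : Cusp} {N : ℕ} (h : IsChainOf a b N) :
    IsChainOf (mobius g a) (mobius g b) N := by
  obtain ⟨hN, γ, h1, h2, h3⟩ := h
  exact ⟨hN, fun i => g * γ i, by rw [mobius_mul, h1],
    fun i hi => by rw [mobius_mul, mobius_mul, h2 i hi],
    by rw [mobius_mul, h3]⟩

lemma chain_concat {a b c : Cusp} {M N : ℕ} (h1 : IsChainOf a b M) (h2 : IsChainOf b c N) :
    IsChainOf a c (M + N) := by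
  obtain ⟨hM, γ, g1, g2, g3⟩ := h1
  obtain ⟨hN, δ, d1, d2, d3⟩ := h2
  refine ⟨by omega, fun i => if i < M then γ i else δ (i - M), ?_, ?_, ?_⟩
  · simp only [if_pos hM]; exact g1
  · intro i hi
    by_cases h : i + 1 < M
    · simp only [if_pos (by omega : i < M), if_pos h]
      exact g2 i h
    · by_cases h' : i < M
      · simp only [if_pos h', if_neg (by omega : ¬ i + 1 < M)]
        have e1 : i = M - 1 := by omega
        have e2 : i + 1 - M = 0 := by omega
        rw [e2, e1, g3, d1]
      · simp only [if_neg h', if_neg (by omega : ¬ i + 1 < M)]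
        have e1 : i + 1 - M = (i - M) + 1 := by omega
        rw [e1]
        exact d2 (i - M) (by omega)
  · simp only [if_neg (by omega : ¬ M + N - 1 < M)]
    have e : M + N - 1 - M = N - 1 := by omega
    rw [e]
    exact d3

lemma chain_reverse {a b : Cusp} {N : ℕ} (h : IsChainOf a b N) : IsChainOf b a N := by
  obtain ⟨hN, γ, g1, g2, g3⟩ := h
  refine ⟨hN, fun i => γ (N - 1 - i) * pS, ?_, ?_, ?_⟩
  · rw [mobius_mul, mobius_pS_inf]
    simpa using g3
  · intro i hi
    rw [mobius_mul, mobius_mul, mobius_pS_inf, mobius_pS_zero]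
    have e : N - 1 - (i + 1) + 1 = N - 1 - i := by omega
    rw [← e, (g2 (N - 1 - (i + 1)) (by omega))]
  · rw [mobius_mul, mobius_pS_zero]
    have e : N - 1 - (N - 1) = 0 := by omega
    rw [e, g1]

lemma chain_inf_zero : IsChainOf cInf cZero 1 := by
  refine ⟨one_pos, fun _ => 1, mobius_one _, ?_, mobius_one _⟩
  intro i hi; omega

lemma chain_inf_int (m : ℤ) : IsChainOf cInf (OnePoint.some (m : ℚ)) 1 := by
  refine ⟨one_pos, fun _ => pTm m, mobius_pTm_inf m, ?_, ?_⟩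
  · intro i hi; omega
  · show mobius (pTm m) cZero = _
    rw [show cZero = OnePoint.some (0 : ℚ) from rfl, mobius_pTm_some]
    norm_num

lemma chain_inf_inf : IsChainOf cInf cInf 2 := by
  have := chain_concat chain_inf_zero (chain_reverse chain_inf_zero)
  exact this

lemma P_closure {b : Cusp} (g : PSL2Z)
    (hg : ∃ M, IsChainOf cInf (mobius g cInf) M)
    (hb : ∃ N, IsChainOf cInf b N) :
    ∃ K, IsChainOf cInf (mobius g b) K := by
  obtain ⟨M, hM⟩ := hg
  obtain ⟨N, hN⟩ := hb
  exact ⟨M + N, chain_concat hM (chain_map g hN)⟩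

lemma exists_chain_inf_div : ∀ n : ℕ, ∀ p : ℤ,
    ∃ N, IsChainOf cInf (OnePoint.some ((p : ℚ) / (n : ℚ))) N := by
  intro n
  induction n using Nat.strong_induction_on with
  | _ n ih =>
  intro p
  rcases Nat.eq_zero_or_pos n with hn | hn
  · subst hn
    simp only [Nat.cast_zero, div_zero]
    exact ⟨1, chain_inf_zero⟩
  · have hnz : (n : ℤ) ≠ 0 := by positivity
    set m : ℤ := p / (n : ℤ) with hm
    set s : ℤ := p % (n : ℤ) with hs
    have hps : (n : ℤ) * m + s = p := Int.mul_ediv_add_emod p (n : ℤ)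
    have hs0 : 0 ≤ s := Int.emod_nonneg p hnz
    have hsn : s < n := Int.emod_lt_of_pos p (by exact_mod_cast hn)
    rcases eq_or_lt_of_le hs0 with hseq | hspos
    · -- s = 0 : p / n = m exactly
      have hval : (p : ℚ) / (n : ℚ) = (m : ℚ) := by
        have : (p : ℚ) = (n : ℚ) * (m : ℚ) := by
          rw [← hps, ← hseq]; push_cast; ring
        rw [this]
        field_simp
      rw [hval]
      exact ⟨1, chain_inf_int m⟩
    · -- 0 < s < n
      have hlt : s.toNat < n := by omega
      obtain ⟨N1, hN1⟩ := ih s.toNat hlt (-(n : ℤ))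
      have hcast : ((s.toNat : ℕ) : ℚ) = (s : ℚ) := by
        have h := Int.toNat_of_nonneg hs0
        exact_mod_cast congrArg (fun z : ℤ => (z : ℚ)) h
      have hsq : (s : ℚ) ≠ 0 := by
        have : (0 : ℚ) < (s : ℚ) := by exact_mod_cast hspos
        linarith
      have hnq : (n : ℚ) ≠ 0 := by positivity
      have hx : ((-(n : ℤ) : ℤ) : ℚ) / ((s.toNat : ℕ) : ℚ) = -(n : ℚ) / (s : ℚ) := by
        rw [hcast]; push_cast; ring_nf
      rw [hx] at hN1
      -- apply S
      have hxne : -(n : ℚ) / (s : ℚ) ≠ 0 := by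
        apply div_ne_zero _ hsq
        simp only [neg_ne_zero]
        exact hnq
      have h2 : ∃ N, IsChainOf cInf (mobius pS (OnePoint.some (-(n : ℚ) / (s : ℚ)))) N :=
        P_closure pS ⟨1, by rw [mobius_pS_inf]; exact chain_inf_zero⟩ ⟨N1, hN1⟩
      rw [mobius_pS_some _ hxne] at h2
      have hval2 : -1 / (-(n : ℚ) / (s : ℚ)) = (s : ℚ) / (n : ℚ) := by
        field_simp
      rw [hval2] at h2
      -- apply T^m
      have h3 : ∃ N, IsChainOf cInf (mobius (pTm m) (OnePoint.some ((s : ℚ) / (n : ℚ)))) N :=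
        P_closure (pTm m) ⟨2, by rw [mobius_pTm_inf]; exact chain_inf_inf⟩ h2
      rw [mobius_pTm_some] at h3
      have hval3 : (s : ℚ) / (n : ℚ) + (m : ℚ) = (p : ℚ) / (n : ℚ) := by
        have hp : (p : ℚ) = (n : ℚ) * (m : ℚ) + (s : ℚ) := by
          rw [← hps]; push_cast; ring
        rw [hp]
        field_simp
        ring
      rw [hval3] at h3
      exact h3

lemma exists_chain_inf (b : Cusp) : ∃ N, IsChainOf cInf b N := by
  cases b with
  | none => exact ⟨2, chain_inf_inf⟩
  | some r =>
      have := exists_chain_inf_div r.den r.num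
      rwa [Rat.num_div_den] at this

lemma exists_chain (a b : Cusp) : ∃ N, IsChainOf a b N := by
  obtain ⟨M, hM⟩ := exists_chain_inf a
  obtain ⟨N, hN⟩ := exists_chain_inf b
  exact ⟨M + N, chain_concat (chain_reverse hM) hN⟩

end ChainDev

/-- The chain distance is a well-defined `Γ`-invariant metric on the cusps. -/
theorem cuspDist_is_invariant_metric :
    -- (i) chains of finite length always exist
    (∀ a b : Cusp, ∃ N : ℕ, IsChainOf a b N) ∧
    -- (ii) symmetry
    (∀ a b : Cusp, cuspDist a b = cuspDist b a) ∧
    -- (iii) separation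
    (∀ a b : Cusp, cuspDist a b = 0 ↔ a = b) ∧
    -- (iv) triangle inequality
    (∀ a b c : Cusp, cuspDist a c ≤ cuspDist a b + cuspDist b c) ∧
    -- (v) Γ-invariance
    (∀ (γ : PSL2Z) (a b : Cusp), cuspDist (mobius γ a) (mobius γ b) = cuspDist a b) := by
  refine ⟨exists_chain, ?_, ?_, ?_, ?_⟩
  · -- symmetry
    intro a b
    unfold cuspDist
    by_cases h : a = b
    · rw [if_pos h, if_pos h.symm]
    · rw [if_neg h, if_neg (Ne.symm h)]
      congr 1
      ext N
      exact ⟨chain_reverse, chain_reverse⟩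
  · -- separation
    intro a b
    constructor
    · intro h
      by_contra hne
      rw [cuspDist, if_neg hne] at h
      have hmem : sInf {N | IsChainOf a b N} ∈ {N | IsChainOf a b N} :=
        Nat.sInf_mem (exists_chain a b)
      rw [h] at hmem
      exact absurd hmem.1 (lt_irrefl 0)
    · intro h
      rw [cuspDist, if_pos h]
  · -- triangle
    intro a b c
    by_cases hac : a = c
    · rw [cuspDist, if_pos hac]
      exact Nat.zero_le _
    · by_cases hab : a = b
      · subst hab
        rw [show cuspDist a a = 0 from by rw [cuspDist, if_pos rfl], zero_add]
      · by_cases hbc : b = c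
        · subst hbc
          rw [show cuspDist b b = 0 from by rw [cuspDist, if_pos rfl], add_zero]
        · rw [cuspDist, if_neg hac, cuspDist, if_neg hab, cuspDist, if_neg hbc]
          have hM : sInf {N | IsChainOf a b N} ∈ {N | IsChainOf a b N} :=
            Nat.sInf_mem (exists_chain a b)
          have hN : sInf {N | IsChainOf b c N} ∈ {N | IsChainOf b c N} :=
            Nat.sInf_mem (exists_chain b c)
          exact Nat.sInf_le (chain_concat hM hN)
  · -- invariance
    intro g a b
    by_cases h : a = b
    · simp only [cuspDist, if_pos h, if_pos (show mobius g a = mobius g b from by rw [h])]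
    · have h' : mobius g a ≠ mobius g b := fun hc => h (mobius_injective g hc)
      rw [cuspDist, if_neg h', cuspDist, if_neg h]
      congr 1
      ext N
      constructor
      · intro hc
        have := chain_map g⁻¹ hc
        rwa [mobius_inv_cancel, mobius_inv_cancel] at this
      · exact chain_map g
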